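/- A Lagrangian subspace L of V ⊕ V* satisfies L ∩ V = 0 if and only if there exists an alternating bilinear form Π on V* with L = Graph(Π) := {(v, ξ) : ξ ∈ V* and η(v) = Π(ξ, η) for all η ∈ V*}. -/

import Mathlib

/-- The canonical split-signature pairing on `V ⊕ V*`. -/
noncomputable def diracPairing {V : Type*} [AddCommGroup V] [Module ℝ V]
    (x y : V × Module.Dual ℝ V) : ℝ :=
  (x.2 y.1 + y.2 x.1) / 2

/-- `L ⊆ V ⊕ V*` is Lagrangian: `dim L = dim V` and the pairing vanishes on `L`. -/
def IsLagrangian {V : Type*} [AddCommGroup V] [Module ℝ V]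
    (L : Submodule ℝ (V × Module.Dual ℝ V)) : Prop :=
  Module.finrank ℝ L = Module.finrank ℝ V ∧
    ∀ x ∈ L, ∀ y ∈ L, diracPairing x y = 0

/-- A Lagrangian `L ⊆ V ⊕ V*` satisfies `L ∩ V = 0` if and only if `L` is the graph
`{(v, ξ) : η(v) = Π(ξ, η) for all η ∈ V*}` of an alternating bilinear form `Π` on `V*`. -/
theorem lagrangian_inf_tangent_eq_bot_iff_graph
    (V : Type*) [AddCommGroup V] [Module ℝ V] [FiniteDimensional ℝ V]
    (L : Submodule ℝ (V × Module.Dual ℝ V)) (hL : IsLagrangian L) :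
    L ⊓ LinearMap.range (LinearMap.inl ℝ V (Module.Dual ℝ V)) = ⊥ ↔
      ∃ P : Module.Dual ℝ V →ₗ[ℝ] Module.Dual ℝ V →ₗ[ℝ] ℝ, (∀ ξ, P ξ ξ = 0) ∧
        (L : Set (V × Module.Dual ℝ V)) =
          {q | ∀ η : Module.Dual ℝ V, η q.1 = P q.2 η} := by
  obtain ⟨hdim, hpair⟩ := hL
  constructor
  · intro hbot
    -- the projection to the dual factor, restricted to L
    set pr : L →ₗ[ℝ] Module.Dual ℝ V :=
      (LinearMap.snd ℝ V (Module.Dual ℝ V)).comp L.subtype with hpr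
    have hpr2 : ∀ x : L, pr x = (x : V × Module.Dual ℝ V).2 := fun _ => rfl
    clear_value pr
    have hinj : Function.Injective pr := by
      intro a b hab
      have hd : ((a - b : L) : V × Module.Dual ℝ V).2 = 0 := by
        have hsub : ((a - b : L) : V × Module.Dual ℝ V).2 =
            ((a : V × Module.Dual ℝ V)).2 - ((b : V × Module.Dual ℝ V)).2 := rfl
        rw [hsub, ← hpr2 a, ← hpr2 b, hab, sub_self]
      have hm : ((a - b : L) : V × Module.Dual ℝ V) ∈
          L ⊓ LinearMap.range (LinearMap.inl ℝ V (Module.Dual ℝ V)) := by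
        exact ⟨(a - b : L).2, ⟨((a - b : L) : V × Module.Dual ℝ V).1,
          Prod.ext rfl hd.symm⟩⟩
      rw [hbot] at hm
      have : (a - b : L) = 0 := Subtype.ext (by simpa using hm)
      exact sub_eq_zero.mp this
    have hfr : Module.finrank ℝ L = Module.finrank ℝ (Module.Dual ℝ V) := by
      rw [hdim, Subspace.dual_finrank_eq]
    let e := LinearMap.linearEquivOfInjective (K := ℝ) (V := L) (V₂ := Module.Dual ℝ V) pr hinj hfr
    -- f ξ = the V-component of the unique element of L over ξ
    let f : Module.Dual ℝ V →ₗ[ℝ] V :=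
      ((LinearMap.fst ℝ V (Module.Dual ℝ V)).comp L.subtype).comp e.symm.toLinearMap
    have hmem : ∀ ξ : Module.Dual ℝ V, (f ξ, ξ) ∈ L := by
      intro ξ
      have h2 : ((e.symm ξ : L) : V × Module.Dual ℝ V).2 = ξ := by
        rw [← hpr2, ← LinearMap.linearEquivOfInjective_apply (K := ℝ) (V := L) (V₂ := Module.Dual ℝ V)
          (f := pr) (hf := hinj) (hdim := hfr)]
        exact e.apply_symm_apply ξ
      have h1 : ((e.symm ξ : L) : V × Module.Dual ℝ V).1 = f ξ := rfl
      have := (e.symm ξ : L).2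
      rwa [show ((e.symm ξ : L) : V × Module.Dual ℝ V) = (f ξ, ξ) from
        Prod.ext h1 h2] at this
    refine ⟨(Module.Dual.eval ℝ V).comp f, ?_, ?_⟩
    · intro ξ
      have := hpair _ (hmem ξ) _ (hmem ξ)
      simp only [diracPairing] at this
      have : ξ (f ξ) + ξ (f ξ) = 0 := by linarith [this, div_eq_zero_iff.mp this]
      simp only [Module.Dual.eval, LinearMap.comp_apply, LinearMap.flip_apply,
        LinearMap.id_apply]
      linarith
    · ext q
      simp only [Set.mem_setOf_eq, SetLike.mem_coe, LinearMap.comp_apply,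
        Module.Dual.eval_apply]
      constructor
      · intro hq η
        -- q and (f q.2, q.2) are both in L with same second component
        have h2 : pr ⟨q, hq⟩ = pr ⟨(f q.2, q.2), hmem q.2⟩ := by
          rw [hpr2, hpr2]
        have := hinj h2
        have h1 : q.1 = f q.2 := congrArg (Prod.fst ∘ Subtype.val) this
        rw [h1]
      · intro hq
        have h1 : q.1 = f q.2 := by
          rw [← sub_eq_zero, ← Module.forall_dual_apply_eq_zero_iff ℝ]
          intro η
          simp [hq η]
        have : q = (f q.2, q.2) := Prod.ext h1 rfl
        rw [this]
        exact hmem q.2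
  · rintro ⟨P, hPalt, hgraph⟩
    rw [Submodule.eq_bot_iff]
    rintro x ⟨hxL, v, hv⟩
    have hx : x ∈ {q : V × Module.Dual ℝ V | ∀ η, η q.1 = P q.2 η} := by
      rw [← hgraph]; exact hxL
    have hx2 : x.2 = 0 := by rw [← hv]; rfl
    have h1 : x.1 = 0 := by
      rw [← Module.forall_dual_apply_eq_zero_iff ℝ]
      intro η
      have := hx η
      rw [hx2] at this
      simpa using this
    exact Prod.ext h1 hx2
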